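/- Let Ω ⊂ ℝ^d be a nonempty bounded open set, Y a normed vector space, A : L²(Ω) → Y a continuous (possibly nonlinear) map, g ∈ Y, β > 0, and R : L²(Ω) → ℝ a continuous functional. Then for every integer n ≥ 1 and every r > 0 there exists f* ∈ X_{n,r} such that ‖A(f*) − g‖_Y + β·R(f*) ≤ ‖A(f) − g‖_Y + β·R(f) for all f ∈ X_{n,r}; that is, the penalized residual functional attains its minimum over the network class X_{n,r}. -/

import Mathlib

open MeasureTheory Filter Topology Bornology

noncomputable section

/-- Parameter of a single neuron: `(a, b, c)`. -/
abbrev NNParam (d : ℕ) : Type := ℝ × (Fin d → ℝ) × ℝ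

/-- ℓ¹ norm on `ℝ^d`. -/
def l1 {d : ℕ} (b : Fin d → ℝ) : ℝ := ∑ i, |b i|

/-- The two-layer ReLU network with parameters `θ`. -/
def netFun {d n : ℕ} (θ : Fin n → NNParam d) : (Fin d → ℝ) → ℝ :=
  fun x => (1 / (n : ℝ)) * ∑ j, (θ j).1 * max (∑ i, (θ j).2.1 i * x i + (θ j).2.2) 0

theorem netFun_continuous {d n : ℕ} (θ : Fin n → NNParam d) : Continuous (netFun θ) := by
  unfold netFun
  refine continuous_const.mul (continuous_finset_sum _ fun j _ => continuous_const.mul ?_)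
  exact ((continuous_finset_sum _ fun i _ =>
    (continuous_const.mul (continuous_apply i))).add continuous_const).max continuous_const

/-- Membership of a single-neuron parameter in the set `M_r`. -/
def memMr {d : ℕ} (r : ℝ) (p : NNParam d) : Prop :=
  |p.1| ≤ r ∧ l1 p.2.1 + |p.2.2| = 1

theorem memLp_net {d n : ℕ} {Ω : Set (Fin d → ℝ)} (hΩo : IsOpen Ω) (hΩb : IsBounded Ω)
    (θ : Fin n → NNParam d) : MemLp (netFun θ) 2 (volume.restrict Ω) := by
  have hc := netFun_continuous θ
  obtain ⟨C, hC⟩ := hΩb.isCompact_closure.exists_bound_of_continuousOn hc.continuousOn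
  haveI : Fact (volume Ω < ⊤) := ⟨hΩb.measure_lt_top⟩
  refine MemLp.of_bound (hc.aestronglyMeasurable.restrict) C ?_
  filter_upwards [ae_restrict_mem hΩo.measurableSet] with x hx
  exact hC x (subset_closure hx)

/-- The two-layer ReLU network with parameters `θ`, as an element of `L²(Ω)`. -/
def netLp {d n : ℕ} (Ω : Set (Fin d → ℝ)) (hΩo : IsOpen Ω) (hΩb : IsBounded Ω)
    (θ : Fin n → NNParam d) : Lp ℝ 2 (volume.restrict Ω) :=
  (memLp_net hΩo hΩb θ).toLp (netFun θ)

/-- The class `X_{n,r}` of width-`n` networks with parameters in `M_r`, inside `L²(Ω)`. -/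
def Xlp {d : ℕ} (Ω : Set (Fin d → ℝ)) (hΩo : IsOpen Ω) (hΩb : IsBounded Ω)
    (n : ℕ) (r : ℝ) : Set (Lp ℝ 2 (volume.restrict Ω)) :=
  {f | ∃ θ : Fin n → NNParam d, (∀ j, memMr r (θ j)) ∧ f = netLp Ω hΩo hΩb θ}

lemma dist_a {d : ℕ} (p q : NNParam d) : |p.1 - q.1| ≤ dist p q := by
  rw [← Real.dist_eq, Prod.dist_eq]; exact le_max_left _ _

lemma dist_b {d : ℕ} (p q : NNParam d) (i : Fin d) : |p.2.1 i - q.2.1 i| ≤ dist p q := by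
  rw [← Real.dist_eq]
  calc dist (p.2.1 i) (q.2.1 i) ≤ dist p.2.1 q.2.1 := dist_le_pi_dist _ _ i
    _ ≤ dist p.2 q.2 := by rw [Prod.dist_eq]; exact le_max_left _ _
    _ ≤ dist p q := by rw [Prod.dist_eq]; exact le_max_right _ _

lemma dist_c {d : ℕ} (p q : NNParam d) : |p.2.2 - q.2.2| ≤ dist p q := by
  rw [← Real.dist_eq]
  calc dist p.2.2 q.2.2 ≤ dist p.2 q.2 := by rw [Prod.dist_eq]; exact le_max_right _ _
    _ ≤ dist p q := by rw [Prod.dist_eq]; exact le_max_right _ _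

-- bound on the affine term

lemma affine_bound {d : ℕ} {M : ℝ} (hM : 0 ≤ M) (p : NNParam d)
    (hp : l1 p.2.1 + |p.2.2| = 1) {x : Fin d → ℝ} (hx : ∀ i, |x i| ≤ M) :
    |∑ i, p.2.1 i * x i + p.2.2| ≤ M + 1 := by
  have h1 : |∑ i, p.2.1 i * x i + p.2.2| ≤ M * l1 p.2.1 + |p.2.2| := by
    calc |∑ i, p.2.1 i * x i + p.2.2| ≤ |∑ i, p.2.1 i * x i| + |p.2.2| := abs_add_le _ _
      _ ≤ M * l1 p.2.1 + |p.2.2| := by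
        gcongr
        calc |∑ i, p.2.1 i * x i| ≤ ∑ i, |p.2.1 i * x i| := Finset.abs_sum_le_sum_abs _ _
          _ ≤ ∑ i, |p.2.1 i| * M := by
            refine Finset.sum_le_sum fun i _ => ?_
            rw [abs_mul]; exact mul_le_mul_of_nonneg_left (hx i) (abs_nonneg _)
          _ = M * l1 p.2.1 := by simp [l1, Finset.mul_sum, mul_comm]
  have hl1 : 0 ≤ l1 p.2.1 := Finset.sum_nonneg fun i _ => abs_nonneg _
  have hc : 0 ≤ |p.2.2| := abs_nonneg _
  nlinarith

lemma affine_diff_bound {d : ℕ} {M : ℝ} (hM : 0 ≤ M) (p q : NNParam d)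
    {x : Fin d → ℝ} (hx : ∀ i, |x i| ≤ M) :
    |(∑ i, p.2.1 i * x i + p.2.2) - (∑ i, q.2.1 i * x i + q.2.2)|
      ≤ (d * M + 1) * dist p q := by
  have : (∑ i, p.2.1 i * x i + p.2.2) - (∑ i, q.2.1 i * x i + q.2.2)
      = (∑ i, (p.2.1 i - q.2.1 i) * x i) + (p.2.2 - q.2.2) := by
    simp only [sub_mul, Finset.sum_sub_distrib]
    ring
  rw [this]
  calc |(∑ i, (p.2.1 i - q.2.1 i) * x i) + (p.2.2 - q.2.2)|
      ≤ |∑ i, (p.2.1 i - q.2.1 i) * x i| + |p.2.2 - q.2.2| := abs_add_le _ _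
    _ ≤ (∑ i, |(p.2.1 i - q.2.1 i)| * |x i|) + dist p q := by
        gcongr
        · calc |∑ i, (p.2.1 i - q.2.1 i) * x i| ≤ ∑ i, |(p.2.1 i - q.2.1 i) * x i| :=
            Finset.abs_sum_le_sum_abs _ _
          _ = ∑ i, |(p.2.1 i - q.2.1 i)| * |x i| := by simp [abs_mul]
        · exact dist_c p q
    _ ≤ (∑ _i : Fin d, dist p q * M) + dist p q := by
        refine add_le_add (Finset.sum_le_sum fun i _ =>
          mul_le_mul (dist_b p q i) (hx i) (abs_nonneg _) dist_nonneg) le_rfl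
    _ = d * (dist p q * M) + dist p q := by simp [Finset.sum_const, nsmul_eq_mul]
    _ = (d * M + 1) * dist p q := by ring

lemma netFun_diff_bound {d n : ℕ} {r M : ℝ} (hr : 0 ≤ r) (hM : 0 ≤ M)
    {θ θ' : Fin n → NNParam d} (hθ : ∀ j, memMr r (θ j)) (hθ' : ∀ j, memMr r (θ' j))
    {x : Fin d → ℝ} (hx : ∀ i, |x i| ≤ M) :
    |netFun θ x - netFun θ' x| ≤ ((M + 1) + r * (d * M + 1)) * dist θ θ' := by
  set L : ℝ := (M + 1) + r * (d * M + 1) with hL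
  set D : ℝ := dist θ θ' with hD
  have hD0 : 0 ≤ D := dist_nonneg
  have hkey : ∀ j : Fin n,
      |(θ j).1 * max (∑ i, (θ j).2.1 i * x i + (θ j).2.2) 0
        - (θ' j).1 * max (∑ i, (θ' j).2.1 i * x i + (θ' j).2.2) 0| ≤ L * D := by
    intro j
    set p := θ j with hp
    set q := θ' j with hq
    set mp := max (∑ i, p.2.1 i * x i + p.2.2) 0 with hmp
    set mq := max (∑ i, q.2.1 i * x i + q.2.2) 0 with hmq
    have hjD : dist p q ≤ D := dist_le_pi_dist θ θ' j
    have hmpb : |mp| ≤ M + 1 := by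
      refine le_trans ?_ (affine_bound hM p (hθ j).2 hx)
      rw [abs_le]
      constructor
      · exact le_trans (neg_nonpos_of_nonneg (abs_nonneg _)) (le_max_right _ _)
      · exact max_le (le_abs_self _) (abs_nonneg _)
    have hdm : |mp - mq| ≤ (d * M + 1) * D := by
      refine le_trans (abs_max_sub_max_le_abs _ _ 0) ?_
      refine le_trans (affine_diff_bound hM p q hx) ?_
      exact mul_le_mul_of_nonneg_left hjD (by positivity)
    have hqa : |q.1| ≤ r := (hθ' j).1
    have hda : |p.1 - q.1| ≤ D := le_trans (dist_a p q) hjD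
    have : p.1 * mp - q.1 * mq = (p.1 - q.1) * mp + q.1 * (mp - mq) := by ring
    rw [this]
    calc |(p.1 - q.1) * mp + q.1 * (mp - mq)|
        ≤ |(p.1 - q.1) * mp| + |q.1 * (mp - mq)| := abs_add_le _ _
      _ = |p.1 - q.1| * |mp| + |q.1| * |mp - mq| := by rw [abs_mul, abs_mul]
      _ ≤ D * (M + 1) + r * ((d * M + 1) * D) := by
          refine add_le_add (mul_le_mul hda hmpb (abs_nonneg _) hD0)
            (mul_le_mul hqa hdm (abs_nonneg _) hr)
      _ = L * D := by rw [hL]; ring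
  have hsum : |∑ j, ((θ j).1 * max (∑ i, (θ j).2.1 i * x i + (θ j).2.2) 0
      - (θ' j).1 * max (∑ i, (θ' j).2.1 i * x i + (θ' j).2.2) 0)| ≤ n * (L * D) := by
    refine le_trans (Finset.abs_sum_le_sum_abs _ _) ?_
    refine le_trans (Finset.sum_le_sum fun j _ => hkey j) ?_
    simp [Finset.sum_const]
  have hLD : 0 ≤ L * D := by positivity
  have hrepr : netFun θ x - netFun θ' x
      = (1 / (n : ℝ)) * ∑ j, ((θ j).1 * max (∑ i, (θ j).2.1 i * x i + (θ j).2.2) 0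
        - (θ' j).1 * max (∑ i, (θ' j).2.1 i * x i + (θ' j).2.2) 0) := by
    rw [netFun, netFun, Finset.sum_sub_distrib]; ring
  rw [hrepr, abs_mul]
  rcases Nat.eq_zero_or_pos n with h0 | hpos
  · subst h0; simp [hLD]
  · have hn : (0:ℝ) < n := by exact_mod_cast hpos
    calc |1 / (n:ℝ)| * |∑ j, _| ≤ (1 / (n:ℝ)) * ((n:ℝ) * (L * D)) := by
          rw [abs_of_nonneg (by positivity : (0:ℝ) ≤ 1 / (n:ℝ))]
          exact mul_le_mul_of_nonneg_left hsum (by positivity)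
      _ = L * D := by field_simp

lemma netLp_dist_le {d n : ℕ} {Ω : Set (Fin d → ℝ)} (hΩo : IsOpen Ω) (hΩb : IsBounded Ω)
    (θ θ' : Fin n → NNParam d) {C : ℝ} (hC : 0 ≤ C)
    (h : ∀ x ∈ Ω, |netFun θ x - netFun θ' x| ≤ C) :
    dist (netLp Ω hΩo hΩb θ) (netLp Ω hΩo hΩb θ')
      ≤ ((volume Ω) ^ ((2:ℝ)⁻¹)).toReal * C := by
  rw [dist_eq_norm, netLp, netLp, ← MemLp.toLp_sub, Lp.norm_toLp]
  have hb : eLpNorm (netFun θ - netFun θ') 2 (volume.restrict Ω)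
      ≤ (volume Ω) ^ ((2:ℝ)⁻¹) * ENNReal.ofReal C := by
    have hae : ∀ᵐ x ∂(volume.restrict Ω), ‖(netFun θ - netFun θ') x‖ ≤ C := by
      filter_upwards [ae_restrict_mem hΩo.measurableSet] with x hx
      simpa [Real.norm_eq_abs] using h x hx
    have := eLpNorm_le_of_ae_bound (p := 2) hae
    simpa [Measure.restrict_apply_univ] using this
  have hfin : (volume Ω) ^ ((2:ℝ)⁻¹) * ENNReal.ofReal C ≠ ⊤ := by
    refine ENNReal.mul_ne_top ?_ ENNReal.ofReal_ne_top
    exact (ENNReal.rpow_lt_top_of_nonneg (by norm_num) hΩb.measure_lt_top.ne).ne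
  calc (eLpNorm (netFun θ - netFun θ') 2 (volume.restrict Ω)).toReal
      ≤ ((volume Ω) ^ ((2:ℝ)⁻¹) * ENNReal.ofReal C).toReal := ENNReal.toReal_mono hfin hb
    _ = ((volume Ω) ^ ((2:ℝ)⁻¹)).toReal * C := by
        rw [ENNReal.toReal_mul, ENNReal.toReal_ofReal hC]

lemma continuousOn_netLp {d n : ℕ} {Ω : Set (Fin d → ℝ)} (hΩo : IsOpen Ω)
    (hΩb : IsBounded Ω) {r : ℝ} (hr : 0 ≤ r) :
    ContinuousOn (netLp Ω hΩo hΩb) {θ : Fin n → NNParam d | ∀ j, memMr r (θ j)} := by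
  obtain ⟨M0, hM0⟩ := hΩb.exists_norm_le
  set M : ℝ := max M0 0 with hMdef
  have hM : 0 ≤ M := le_max_right _ _
  have hxM : ∀ x ∈ Ω, ∀ i, |x i| ≤ M := by
    intro x hx i
    calc |x i| = ‖x i‖ := rfl
      _ ≤ ‖x‖ := norm_le_pi_norm x i
      _ ≤ M0 := hM0 x hx
      _ ≤ M := le_max_left _ _
  set V : ℝ := ((volume Ω) ^ ((2:ℝ)⁻¹)).toReal with hV
  have hV0 : 0 ≤ V := ENNReal.toReal_nonneg
  set L : ℝ := (M + 1) + r * (d * M + 1) with hLdef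
  have hL0 : 0 ≤ L := by positivity
  refine (LipschitzOnWith.of_dist_le_mul (K := Real.toNNReal (V * L)) ?_).continuousOn
  intro θ hθ θ' hθ'
  rw [Real.coe_toNNReal _ (by positivity)]
  have := netLp_dist_le hΩo hΩb θ θ' (C := L * dist θ θ') (by positivity)
    (fun x hx => netFun_diff_bound hr hM hθ hθ' (hxM x hx))
  calc dist (netLp Ω hΩo hΩb θ) (netLp Ω hΩo hΩb θ') ≤ V * (L * dist θ θ') := this
    _ = V * L * dist θ θ' := by ring

lemma isCompact_Mr {d : ℕ} {r : ℝ} (hr : 0 ≤ r) :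
    IsCompact {p : NNParam d | memMr r p} := by
  refine IsCompact.of_isClosed_subset (isCompact_closedBall (0 : NNParam d) (max r 1)) ?_ ?_
  · have h1 : IsClosed {p : NNParam d | |p.1| ≤ r} :=
      isClosed_le (continuous_fst.abs) continuous_const
    have h2 : IsClosed {p : NNParam d | l1 p.2.1 + |p.2.2| = 1} := by
      refine isClosed_eq ?_ continuous_const
      refine Continuous.add ?_ ((continuous_snd.comp continuous_snd).abs)
      exact continuous_finset_sum _ fun i _ =>
        ((continuous_apply i).comp (continuous_fst.comp continuous_snd)).abs
    exact h1.inter h2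
  · intro p hp
    obtain ⟨ha, hbc⟩ := hp
    have hl1 : 0 ≤ l1 p.2.1 := Finset.sum_nonneg fun i _ => abs_nonneg _
    have hbi : ∀ i, |p.2.1 i| ≤ 1 := by
      intro i
      have : |p.2.1 i| ≤ l1 p.2.1 :=
        Finset.single_le_sum (f := fun i => |p.2.1 i|) (fun i _ => abs_nonneg _)
          (Finset.mem_univ i)
      nlinarith [abs_nonneg p.2.2]
    have hc : |p.2.2| ≤ 1 := by nlinarith
    rw [Metric.mem_closedBall, dist_zero_right]
    rw [Prod.norm_def, Prod.norm_def]
    refine max_le (le_trans ha (le_max_left _ _)) (max_le ?_ ?_)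
    · refine le_trans (pi_norm_le_iff_of_nonneg (by norm_num : (0:ℝ) ≤ 1) |>.2
        fun i => ?_) (le_max_right _ _)
      simpa [Real.norm_eq_abs] using hbi i
    · exact le_trans hc (le_max_right _ _)

/-- For a continuous (possibly nonlinear) map `A : L²(Ω) → Y` into a
normed vector space, data `g ∈ Y`, a penalty weight `β > 0` and a continuous functional
`R : L²(Ω) → ℝ`, the penalized residual `f ↦ ‖A(f) − g‖ + β·R(f)` attains its minimum over
the network class `X_{n,r} ⊆ L²(Ω)`. -/
theorem penalized_residual_attains_min_on_network_class
    {d : ℕ} (hd : 1 ≤ d) (Ω : Set (Fin d → ℝ)) (hne : Ω.Nonempty) (hΩo : IsOpen Ω)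
    (hΩb : IsBounded Ω)
    {Y : Type*} [NormedAddCommGroup Y] [NormedSpace ℝ Y]
    (A : Lp ℝ 2 (volume.restrict Ω) → Y) (hA : Continuous A) (g : Y)
    (β : ℝ) (hβ : 0 < β)
    (R : Lp ℝ 2 (volume.restrict Ω) → ℝ) (hR : Continuous R)
    (n : ℕ) (hn : 1 ≤ n) (r : ℝ) (hr : 0 < r) :
    ∃ fs ∈ Xlp Ω hΩo hΩb n r, ∀ f ∈ Xlp Ω hΩo hΩb n r,
      ‖A fs - g‖ + β * R fs ≤ ‖A f - g‖ + β * R f := by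
  set K : Set (Fin n → NNParam d) := {θ | ∀ j, memMr r (θ j)} with hK
  have hKc : IsCompact K := by
    have : K = Set.pi Set.univ (fun _ : Fin n => {p : NNParam d | memMr r p}) := by
      ext θ; simp [hK, Set.mem_pi]
    rw [this]
    exact isCompact_univ_pi fun _ => isCompact_Mr hr.le
  have hXeq : Xlp Ω hΩo hΩb n r = (netLp Ω hΩo hΩb) '' K := by
    ext f
    constructor
    · rintro ⟨θ, hθ, rfl⟩; exact ⟨θ, hθ, rfl⟩
    · rintro ⟨θ, hθ, rfl⟩; exact ⟨θ, hθ, rfl⟩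
  have hXc : IsCompact (Xlp Ω hΩo hΩb n r) := by
    rw [hXeq]; exact hKc.image_of_continuousOn (continuousOn_netLp hΩo hΩb hr.le)
  have hXne : (Xlp Ω hΩo hΩb n r).Nonempty := by
    refine ⟨netLp Ω hΩo hΩb (fun _ => (0, (fun _ => 0), 1)),
      ⟨fun _ => (0, (fun _ => 0), 1), fun _ => ⟨by simpa using hr.le, by simp [memMr, l1]⟩, rfl⟩⟩
  have hobj : Continuous fun f => ‖A f - g‖ + β * R f :=
    ((hA.sub continuous_const).norm).add (continuous_const.mul hR)
  obtain ⟨fs, hfs, hmin⟩ := hXc.exists_isMinOn hXne hobj.continuousOn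
  exact ⟨fs, hfs, fun f hf => hmin hf⟩

end
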